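/- Let N ∈ (0,1), R_c > 0, h > 0, k = 2N√((1−N²)/R_c) and q, G ∈ ℝ. Suppose u, w : ℝ → ℝ are twice continuously differentiable on [0,h], satisfy u''(t) = q + 2N² w'(t) and −R_c w''(t) + 4N² w(t) − 2N² u'(t) = G for all t ∈ [0,h], and u(0) = u(h) = w(0) = w(h) = 0. Then ∫₀^h u(t) dt = −(h³/(1−N²))·Φ(h,N,R_c)·q and ∫₀^h w(t) dt = (h/(4N²)) · (2·tanh(kh/2) − kh)/(2N²·tanh(kh/2) − kh) · G, where Φ(h,N,R_c) = 1/12 + R_c/(4h²(1−N²)) − (1/(4h))·√(N²R_c/(1−N²))·coth(N h √((1−N²)/R_c)). -/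

import Mathlib

/-- `coth x = cosh x / sinh x`. -/
noncomputable def cothR (x : ℝ) : ℝ := Real.cosh x / Real.sinh x

/-- The coefficient function `Φ(h,N,R_c)` of the micropolar Reynolds equation. -/
noncomputable def Phi (h N Rc : ℝ) : ℝ :=
  1 / 12 + Rc / (4 * h ^ 2 * (1 - N ^ 2)) -
    (1 / (4 * h)) * Real.sqrt (N ^ 2 * Rc / (1 - N ^ 2)) *
      cothR (N * h * Real.sqrt ((1 - N ^ 2) / Rc))

/-- `(u, w)` is a (twice continuously differentiable) solution of the reduced
micropolar boundary-value problem on `[0, h]` with forcing constants `q, G`. -/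
def IsReducedSolution (N Rc h q G : ℝ) (u w : ℝ → ℝ) : Prop :=
  ContDiffOn ℝ 2 u (Set.Icc 0 h) ∧ ContDiffOn ℝ 2 w (Set.Icc 0 h) ∧
  (∀ t ∈ Set.Icc (0 : ℝ) h,
    derivWithin (derivWithin u (Set.Icc 0 h)) (Set.Icc 0 h) t =
      q + 2 * N ^ 2 * derivWithin w (Set.Icc 0 h) t) ∧
  (∀ t ∈ Set.Icc (0 : ℝ) h,
    -Rc * derivWithin (derivWithin w (Set.Icc 0 h)) (Set.Icc 0 h) t +
      4 * N ^ 2 * w t - 2 * N ^ 2 * derivWithin u (Set.Icc 0 h) t = G) ∧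
  u 0 = 0 ∧ u h = 0 ∧ w 0 = 0 ∧ w h = 0

lemma sinh_lt_mul_cosh {x : ℝ} (hx : 0 < x) : Real.sinh x < x * Real.cosh x := by
  have key : StrictMonoOn (fun y : ℝ => y * Real.cosh y - Real.sinh y) (Set.Ici 0) := by
    apply strictMonoOn_of_deriv_pos (convex_Ici 0)
    · fun_prop
    · intro y hy
      rw [interior_Ici] at hy
      have hd : HasDerivAt (fun y : ℝ => y * Real.cosh y - Real.sinh y)
          (y * Real.sinh y) y := by
        have h1 := ((hasDerivAt_id y).mul (Real.hasDerivAt_cosh y)).sub (Real.hasDerivAt_sinh y)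
        have h3 : 1 * Real.cosh y + id y * Real.sinh y - Real.cosh y = y * Real.sinh y := by
          simp
        rw [h3] at h1
        exact h1
      rw [hd.deriv]
      exact mul_pos hy (Real.sinh_pos_iff.mpr hy)
  have h0 := key Set.self_mem_Ici (le_of_lt hx : (0:ℝ) ≤ x) hx
  simp only [Real.cosh_zero, Real.sinh_zero, mul_zero, zero_mul, sub_zero] at h0
  linarith

lemma interior_hasDerivAt {f : ℝ → ℝ} {a b : ℝ} (hf : DifferentiableOn ℝ f (Set.Icc a b))
    {t : ℝ} (ht : t ∈ Set.Ioo a b) :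
    HasDerivAt f (derivWithin f (Set.Icc a b) t) t := by
  have hmem : Set.Icc a b ∈ nhds t := Icc_mem_nhds ht.1 ht.2
  have hd : DifferentiableAt ℝ f t := (hf t (Set.Ioo_subset_Icc_self ht)).differentiableAt hmem
  rw [derivWithin_of_mem_nhds hmem]
  exact hd.hasDerivAt

lemma key_pairing (N Rc h q G c₁ c₂ : ℝ) (hh : 0 < h) (u w : ℝ → ℝ)
    (hsol : IsReducedSolution N Rc h q G u w)
    (φ φ' φ'' ψ ψ' ψ'' : ℝ → ℝ)
    (hφ : ∀ t, HasDerivAt φ (φ' t) t) (hφ' : ∀ t, HasDerivAt φ' (φ'' t) t)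
    (hψ : ∀ t, HasDerivAt ψ (ψ' t) t) (hψ' : ∀ t, HasDerivAt ψ' (ψ'' t) t)
    (hφ''c : Continuous φ'') (hψ''c : Continuous ψ'')
    (hode1 : ∀ t, φ'' t + 2 * N ^ 2 * ψ' t = c₁)
    (hode2 : ∀ t, -Rc * ψ'' t + 4 * N ^ 2 * ψ t + 2 * N ^ 2 * φ' t = c₂)
    (hbφ0 : φ 0 = 0) (hbφh : φ h = 0) (hbψ0 : ψ 0 = 0) (hbψh : ψ h = 0) :
    c₁ * (∫ t in (0:ℝ)..h, u t) + c₂ * (∫ t in (0:ℝ)..h, w t) =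
      q * (∫ t in (0:ℝ)..h, φ t) + G * (∫ t in (0:ℝ)..h, ψ t) := by
  obtain ⟨hu, hw, heq1, heq2, hu0, huh, hw0, hwh⟩ := hsol
  set I : Set ℝ := Set.Icc 0 h with hI
  have hUD : UniqueDiffOn ℝ I := uniqueDiffOn_Icc hh
  set u₁ := derivWithin u I with hu₁def
  set w₁ := derivWithin w I with hw₁def
  set u₂ := derivWithin u₁ I with hu₂def
  set w₂ := derivWithin w₁ I with hw₂def
  have hu1cd : ContDiffOn ℝ 1 u₁ I := hu.derivWithin hUD (by norm_num)
  have hw1cd : ContDiffOn ℝ 1 w₁ I := hw.derivWithin hUD (by norm_num)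
  have hudiff : DifferentiableOn ℝ u I := hu.differentiableOn (by norm_num)
  have hwdiff : DifferentiableOn ℝ w I := hw.differentiableOn (by norm_num)
  have hu1diff : DifferentiableOn ℝ u₁ I := hu1cd.differentiableOn (by norm_num)
  have hw1diff : DifferentiableOn ℝ w₁ I := hw1cd.differentiableOn (by norm_num)
  have hucont : ContinuousOn u I := hu.continuousOn
  have hwcont : ContinuousOn w I := hw.continuousOn
  have hu1cont : ContinuousOn u₁ I := hu1cd.continuousOn
  have hw1cont : ContinuousOn w₁ I := hw1cd.continuousOn
  have hφc : Continuous φ := by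
    refine continuous_iff_continuousAt.mpr fun t => (hφ t).continuousAt
  have hψc : Continuous ψ := by
    refine continuous_iff_continuousAt.mpr fun t => (hψ t).continuousAt
  have hφ'c : Continuous φ' := by
    refine continuous_iff_continuousAt.mpr fun t => (hφ' t).continuousAt
  have hψ'c : Continuous ψ' := by
    refine continuous_iff_continuousAt.mpr fun t => (hψ' t).continuousAt
  -- the combined function F
  set F : ℝ → ℝ := fun t =>
    u₁ t * φ t - u t * φ' t - Rc * (w₁ t * ψ t - w t * ψ' t)
      - 2 * N ^ 2 * (u t * ψ t) - 2 * N ^ 2 * (w t * φ t) with hFdef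
  have hFcont : ContinuousOn F I := by
    apply ContinuousOn.sub
    apply ContinuousOn.sub
    apply ContinuousOn.sub
    apply ContinuousOn.sub
    · exact hu1cont.mul hφc.continuousOn
    · exact hucont.mul hφ'c.continuousOn
    · exact continuousOn_const.mul ((hw1cont.mul hψc.continuousOn).sub
        (hwcont.mul hψ'c.continuousOn))
    · exact ((continuousOn_const (c := (2 * N ^ 2 : ℝ))).mul
        (hucont.mul hψc.continuousOn)).congr (fun x _ => by simp only [Pi.mul_apply])
    · exact ((continuousOn_const (c := (2 * N ^ 2 : ℝ))).mul
        (hwcont.mul hφc.continuousOn)).congr (fun x _ => by simp only [Pi.mul_apply])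
  have hFderiv : ∀ t ∈ Set.Ioo (0:ℝ) h,
      HasDerivAt F (q * φ t + G * ψ t - c₁ * u t - c₂ * w t) t := by
    intro t ht
    have htI : t ∈ I := Set.Ioo_subset_Icc_self ht
    have hdu : HasDerivAt u (u₁ t) t := interior_hasDerivAt hudiff ht
    have hdw : HasDerivAt w (w₁ t) t := interior_hasDerivAt hwdiff ht
    have hdu1 : HasDerivAt u₁ (u₂ t) t := interior_hasDerivAt hu1diff ht
    have hdw1 : HasDerivAt w₁ (w₂ t) t := interior_hasDerivAt hw1diff ht
    have raw : HasDerivAt F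
        ((u₂ t * φ t + u₁ t * φ' t) - (u₁ t * φ' t + u t * φ'' t)
          - Rc * ((w₂ t * ψ t + w₁ t * ψ' t) - (w₁ t * ψ' t + w t * ψ'' t))
          - 2 * N ^ 2 * (u₁ t * ψ t + u t * ψ' t)
          - 2 * N ^ 2 * (w₁ t * φ t + w t * φ' t)) t := by
      exact ((((hdu1.mul (hφ t)).sub (hdu.mul (hφ' t))).sub
          (((hdw1.mul (hψ t)).sub (hdw.mul (hψ' t))).const_mul Rc)).sub
          (((hdu.mul (hψ t)).const_mul (2 * N ^ 2)))).sub
          (((hdw.mul (hφ t)).const_mul (2 * N ^ 2)))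
    convert raw using 1
    have e1 := heq1 t htI
    have e2 := heq2 t htI
    have o1 := hode1 t
    have o2 := hode2 t
    linear_combination (-(φ t)) * e1 + (-(ψ t)) * e2 + u t * o1 + w t * o2
  have hintg : IntervalIntegrable (fun t => q * φ t + G * ψ t - c₁ * u t - c₂ * w t)
      MeasureTheory.volume 0 h := by
    apply ContinuousOn.intervalIntegrable
    rw [Set.uIcc_of_le hh.le]
    exact (((continuousOn_const (c := q)).mul hφc.continuousOn).add
      ((continuousOn_const (c := G)).mul hψc.continuousOn)).sub
      (((continuousOn_const (c := c₁)).mul hucont).add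
       ((continuousOn_const (c := c₂)).mul hwcont)) |>.congr
      (fun x _ => by simp only [Pi.add_apply, Pi.sub_apply, Pi.mul_apply]; ring)
  have hFTC := intervalIntegral.integral_eq_sub_of_hasDerivAt_of_le hh.le hFcont hFderiv hintg
  have hF0 : F 0 = 0 := by simp [hFdef, hu0, hw0, hbφ0, hbψ0]
  have hFh : F h = 0 := by simp [hFdef, huh, hwh, hbφh, hbψh]
  rw [hF0, hFh, sub_zero] at hFTC
  -- split the integral
  have iφ : IntervalIntegrable φ MeasureTheory.volume 0 h := hφc.intervalIntegrable 0 h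
  have iψ : IntervalIntegrable ψ MeasureTheory.volume 0 h := hψc.intervalIntegrable 0 h
  have iu : IntervalIntegrable u MeasureTheory.volume 0 h := by
    apply ContinuousOn.intervalIntegrable; rw [Set.uIcc_of_le hh.le]; exact hucont
  have iw : IntervalIntegrable w MeasureTheory.volume 0 h := by
    apply ContinuousOn.intervalIntegrable; rw [Set.uIcc_of_le hh.le]; exact hwcont
  have hsplit : (∫ t in (0:ℝ)..h, (q * φ t + G * ψ t - c₁ * u t - c₂ * w t)) =
      q * (∫ t in (0:ℝ)..h, φ t) + G * (∫ t in (0:ℝ)..h, ψ t)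
        - c₁ * (∫ t in (0:ℝ)..h, u t) - c₂ * (∫ t in (0:ℝ)..h, w t) := by
    rw [intervalIntegral.integral_sub (((iφ.const_mul q).add (iψ.const_mul G)).sub
        (iu.const_mul c₁)) (iw.const_mul c₂),
      intervalIntegral.integral_sub ((iφ.const_mul q).add (iψ.const_mul G)) (iu.const_mul c₁),
      intervalIntegral.integral_add (iφ.const_mul q) (iψ.const_mul G),
      intervalIntegral.integral_const_mul, intervalIntegral.integral_const_mul,
      intervalIntegral.integral_const_mul, intervalIntegral.integral_const_mul]
  rw [hsplit] at hFTC
  linarith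


noncomputable def Mfun (k c a b p2 p1 e : ℝ) : ℝ → ℝ := fun t =>
  a * Real.cosh (k * (t - c)) + b * Real.sinh (k * (t - c)) +
    p2 * (t - c) ^ 2 + p1 * (t - c) + e

lemma Mfun_hasDerivAt (k c a b p2 p1 e t : ℝ) :
    HasDerivAt (Mfun k c a b p2 p1 e) (Mfun k c (k * b) (k * a) 0 (2 * p2) p1 t) t := by
  have hlin : HasDerivAt (fun t : ℝ => k * (t - c)) k t := by
    simpa using ((hasDerivAt_id t).sub_const c).const_mul k
  have h1 := (hlin.cosh).const_mul a
  have h2 := (hlin.sinh).const_mul b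
  have h3 : HasDerivAt (fun t : ℝ => p2 * (t - c) ^ 2) (p2 * (2 * (t - c))) t := by
    simpa using (((hasDerivAt_id t).sub_const c).pow 2).const_mul p2
  have h4 : HasDerivAt (fun t : ℝ => p1 * (t - c)) p1 t := by
    simpa using ((hasDerivAt_id t).sub_const c).const_mul p1
  have h5 := (((h1.add h2).add h3).add h4).add_const e
  refine h5.congr_deriv ?_
  simp only [Mfun]
  ring

lemma Mfun_continuous (k c a b p2 p1 e : ℝ) : Continuous (Mfun k c a b p2 p1 e) := by
  unfold Mfun; fun_prop

lemma Mfun_integral (k a b p2 p1 e h : ℝ) (hk : k ≠ 0) :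
    ∫ t in (0:ℝ)..h, Mfun k (h/2) a b p2 p1 e t =
      2 * a / k * Real.sinh (k * h / 2) + p2 * h ^ 3 / 12 + e * h := by
  set c := h / 2 with hc
  set Fa : ℝ → ℝ := fun t => (a/k) * Real.sinh (k*(t-c)) + (b/k) * Real.cosh (k*(t-c))
      + (p2/3)*(t-c)^3 + (p1/2)*(t-c)^2 + e*t with hFa
  have hder : ∀ t ∈ Set.uIcc (0:ℝ) h, HasDerivAt Fa (Mfun k c a b p2 p1 e t) t := by
    intro t _
    have hlin : HasDerivAt (fun t : ℝ => k * (t - c)) k t := by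
      simpa using ((hasDerivAt_id t).sub_const c).const_mul k
    have h1 := (hlin.sinh).const_mul (a/k)
    have h2 := (hlin.cosh).const_mul (b/k)
    have h3 : HasDerivAt (fun t : ℝ => (p2/3) * (t - c) ^ 3) ((p2/3) * (3 * (t - c)^2)) t := by
      simpa using (((hasDerivAt_id t).sub_const c).pow 3).const_mul (p2/3)
    have h4 : HasDerivAt (fun t : ℝ => (p1/2) * (t - c) ^ 2) ((p1/2) * (2 * (t - c))) t := by
      simpa using (((hasDerivAt_id t).sub_const c).pow 2).const_mul (p1/2)
    have h5 : HasDerivAt (fun t : ℝ => e * t) e t := by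
      simpa using (hasDerivAt_id t).const_mul e
    have h6 := (((h1.add h2).add h3).add h4).add h5
    refine h6.congr_deriv ?_
    simp only [Mfun]
    field_simp
  have hint : IntervalIntegrable (Mfun k c a b p2 p1 e) MeasureTheory.volume 0 h :=
    (Mfun_continuous k c a b p2 p1 e).intervalIntegrable 0 h
  rw [intervalIntegral.integral_eq_sub_of_hasDerivAt hder hint]
  have e1 : k * (h - c) = k * h / 2 := by rw [hc]; ring
  have e2 : k * ((0:ℝ) - c) = -(k * h / 2) := by rw [hc]; ring
  simp only [hFa, e1, e2, Real.sinh_neg, Real.cosh_neg]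
  field_simp
  ring

lemma Mfun_eval0 (k a b p2 p1 e h : ℝ) :
    Mfun k (h/2) a b p2 p1 e 0 =
      a * Real.cosh (k*h/2) - b * Real.sinh (k*h/2) + p2*h^2/4 - p1*h/2 + e := by
  simp only [Mfun]
  rw [show k * ((0:ℝ) - h/2) = -(k*h/2) by ring, Real.cosh_neg, Real.sinh_neg]
  ring

lemma Mfun_evalh (k a b p2 p1 e h : ℝ) :
    Mfun k (h/2) a b p2 p1 e h =
      a * Real.cosh (k*h/2) + b * Real.sinh (k*h/2) + p2*h^2/4 + p1*h/2 + e := by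
  simp only [Mfun]
  rw [show k * (h - h/2) = k*h/2 by ring]
  ring


/-- Integral identities of the Appendix: for every solution of the reduced
micropolar boundary-value problem with forcings `q, G`,
`∫₀ʰ u = −(h³/(1−N²)) Φ(h,N,R_c) q` and
`∫₀ʰ w = (h/(4N²)) (2 tanh(kh/2) − kh)/(2N² tanh(kh/2) − kh) G`. -/
theorem reduced_micropolar_integral_identities
    (N Rc h q G : ℝ) (hN0 : 0 < N) (hN1 : N < 1) (hRc : 0 < Rc) (hh : 0 < h)
    (k : ℝ) (hk : k = 2 * N * Real.sqrt ((1 - N ^ 2) / Rc))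
    (u w : ℝ → ℝ) (hsol : IsReducedSolution N Rc h q G u w) :
    (∫ t in (0 : ℝ)..h, u t = -(h ^ 3 / (1 - N ^ 2)) * Phi h N Rc * q) ∧
    (∫ t in (0 : ℝ)..h, w t =
      (h / (4 * N ^ 2)) *
        ((2 * Real.tanh (k * h / 2) - k * h) /
          (2 * N ^ 2 * Real.tanh (k * h / 2) - k * h)) * G) := by
  have h1N : (0:ℝ) < 1 - N ^ 2 := by nlinarith
  have hNne : N ≠ 0 := hN0.ne'
  have hs0 : 0 < Real.sqrt ((1 - N ^ 2) / Rc) := Real.sqrt_pos.mpr (by positivity)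
  have hs2 : Real.sqrt ((1 - N ^ 2) / Rc) ^ 2 = (1 - N ^ 2) / Rc :=
    Real.sq_sqrt (by positivity)
  have hk0 : 0 < k := by rw [hk]; positivity
  have hk2 : Rc * k ^ 2 = 4 * N ^ 2 * (1 - N ^ 2) := by
    have h' : Real.sqrt ((1 - N ^ 2) / Rc) ^ 2 * Rc = 1 - N ^ 2 := by
      rw [hs2]; field_simp
    rw [hk]
    linear_combination (4 * N ^ 2 * Rc) * hs2 + 4 * N ^ 2 * (h' - hs2 * Rc)
  have hx0 : 0 < k * h / 2 := by positivity
  set S := Real.sinh (k * h / 2) with hSdef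
  set C := Real.cosh (k * h / 2) with hCdef
  have hS0 : 0 < S := Real.sinh_pos_iff.mpr hx0
  have hC0 : 0 < C := Real.cosh_pos _
  have hSC : S < k * h / 2 * C := sinh_lt_mul_cosh hx0
  constructor
  · -- first identity
    set P : ℝ := 1 / (2 * (1 - N ^ 2)) with hP
    set A : ℝ := -h / (4 * (1 - N ^ 2) * S) with hA
    set aφ : ℝ := 2 * N ^ 2 * A / k with haφ
    set E : ℝ := -(aφ * C) - P * h ^ 2 / 4 with hE
    have hkaφ : k * aφ = 2 * N ^ 2 * A := by rw [haφ]; field_simp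
    have hφd : ∀ t, HasDerivAt (Mfun k (h/2) aφ 0 P 0 E)
        (Mfun k (h/2) 0 (2*N^2*A) 0 (2*P) 0 t) t := by
      intro t
      have hm := Mfun_hasDerivAt k (h/2) aφ 0 P 0 E t
      convert hm using 1
      simp only [Mfun]
      linear_combination (-(Real.sinh (k * (t - h/2)))) * hkaφ
    have hφ'd : ∀ t, HasDerivAt (Mfun k (h/2) 0 (2*N^2*A) 0 (2*P) 0)
        (Mfun k (h/2) (k*(2*N^2*A)) (k*0) 0 (2*0) (2*P) t) t :=
      fun t => Mfun_hasDerivAt k (h/2) 0 (2*N^2*A) 0 (2*P) 0 t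
    have hψd : ∀ t, HasDerivAt (Mfun k (h/2) 0 (-A) 0 (-P) 0)
        (Mfun k (h/2) (k*(-A)) (k*0) 0 (2*0) (-P) t) t :=
      fun t => Mfun_hasDerivAt k (h/2) 0 (-A) 0 (-P) 0 t
    have hψ'd : ∀ t, HasDerivAt (Mfun k (h/2) (k*(-A)) (k*0) 0 (2*0) (-P))
        (Mfun k (h/2) (k*(k*0)) (k*(k*(-A))) 0 (2*(0:ℝ)) (2*0) t) t :=
      fun t => Mfun_hasDerivAt k (h/2) (k*(-A)) (k*0) 0 (2*0) (-P) t
    have hPid : 2 * P * (1 - N ^ 2) = 1 := by rw [hP]; field_simp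
    have hode1 : ∀ t, Mfun k (h/2) (k*(2*N^2*A)) (k*0) 0 (2*0) (2*P) t
        + 2 * N ^ 2 * Mfun k (h/2) (k*(-A)) (k*0) 0 (2*0) (-P) t = 1 := by
      intro t
      simp only [Mfun]
      linear_combination hPid
    have hode2 : ∀ t, -Rc * Mfun k (h/2) (k*(k*0)) (k*(k*(-A))) 0 (2*(0:ℝ)) (2*0) t
        + 4 * N ^ 2 * Mfun k (h/2) 0 (-A) 0 (-P) 0 t
        + 2 * N ^ 2 * Mfun k (h/2) 0 (2*N^2*A) 0 (2*P) 0 t = 0 := by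
      intro t
      simp only [Mfun]
      linear_combination (A * Real.sinh (k * (t - h/2))) * hk2
    have hbφ0 : Mfun k (h/2) aφ 0 P 0 E 0 = 0 := by
      rw [Mfun_eval0, hE]; ring
    have hbφh : Mfun k (h/2) aφ 0 P 0 E h = 0 := by
      rw [Mfun_evalh, hE]; ring
    have hASP : A * S + P * h / 2 = 0 := by
      rw [hA, hP]; field_simp; ring
    have hbψ0 : Mfun k (h/2) 0 (-A) 0 (-P) 0 0 = 0 := by
      rw [Mfun_eval0]; linear_combination hASP
    have hbψh : Mfun k (h/2) 0 (-A) 0 (-P) 0 h = 0 := by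
      rw [Mfun_evalh]; linear_combination (-1 : ℝ) * hASP
    have key1 := key_pairing N Rc h q G 1 0 hh u w hsol _ _ _ _ _ _
      hφd hφ'd hψd hψ'd (Mfun_continuous _ _ _ _ _ _ _) (Mfun_continuous _ _ _ _ _ _ _)
      hode1 hode2 hbφ0 hbφh hbψ0 hbψh
    rw [Mfun_integral k aφ 0 P 0 E h hk0.ne', Mfun_integral k 0 (-A) 0 (-P) 0 h hk0.ne'] at key1
    rw [← hSdef] at key1
    have key1' : ∫ t in (0:ℝ)..h, u t = q * (2 * aφ / k * S + P * h ^ 3 / 12 + E * h) := by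
      linear_combination key1
    rw [key1']
    -- final algebra
    have hsqrtarg : N * h * Real.sqrt ((1-N^2)/Rc) = k * h / 2 := by rw [hk]; ring
    have hsqrt2 : Real.sqrt (N^2*Rc/(1-N^2)) = 2*N^2/k := by
      have harg : N^2*Rc/(1-N^2) = (2*N^2/k)^2 := by
        field_simp
        linear_combination hk2
      rw [harg, Real.sqrt_sq (by positivity)]
    have hRceq : Rc = 4*N^2*(1-N^2)/k^2 := by
      field_simp
      linear_combination hk2
    unfold Phi cothR
    rw [hsqrtarg, hsqrt2, ← hSdef, ← hCdef, hRceq, hE, haφ, hA, hP]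
    field_simp
    ring
  · -- second identity
    set Den : ℝ := 2 * N ^ 2 * S - k * h * C with hDen
    have hDenneg : Den < 0 := by
      rw [hDen]
      nlinarith [mul_pos h1N hS0, hSC]
    set A₂ : ℝ := h * k / (4 * N ^ 2 * Den) with hA2
    set C₂ : ℝ := -(A₂ * C) with hC2
    set B : ℝ := (4 * N ^ 2 * C₂ - 1) / (2 * N ^ 2) with hB
    have hka2 : k * (2 * N ^ 2 * A₂ / k) = 2 * N ^ 2 * A₂ := by field_simp
    have h2NB : 2 * N ^ 2 * B = 4 * N ^ 2 * C₂ - 1 := by rw [hB]; field_simp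
    have hA2id : 4 * N ^ 2 * (A₂ * Den) = h * k := by
      rw [hA2]; field_simp [hDenneg.ne]
    have hφd : ∀ t, HasDerivAt (Mfun k (h/2) 0 (-(2*N^2*A₂/k)) 0 (-B) 0)
        (Mfun k (h/2) (-(2*N^2*A₂)) 0 0 0 (-B) t) t := by
      intro t
      have hm := Mfun_hasDerivAt k (h/2) 0 (-(2*N^2*A₂/k)) 0 (-B) 0 t
      convert hm using 1
      simp only [Mfun]
      linear_combination (Real.cosh (k * (t - h/2))) * hka2
    have hφ'd : ∀ t, HasDerivAt (Mfun k (h/2) (-(2*N^2*A₂)) 0 0 0 (-B))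
        (Mfun k (h/2) (k*0) (k*(-(2*N^2*A₂))) 0 (2*(0:ℝ)) 0 t) t :=
      fun t => Mfun_hasDerivAt k (h/2) (-(2*N^2*A₂)) 0 0 0 (-B) t
    have hψd : ∀ t, HasDerivAt (Mfun k (h/2) A₂ 0 0 0 C₂)
        (Mfun k (h/2) (k*0) (k*A₂) 0 (2*(0:ℝ)) 0 t) t :=
      fun t => Mfun_hasDerivAt k (h/2) A₂ 0 0 0 C₂ t
    have hψ'd : ∀ t, HasDerivAt (Mfun k (h/2) (k*0) (k*A₂) 0 (2*(0:ℝ)) 0)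
        (Mfun k (h/2) (k*(k*A₂)) (k*(k*0)) 0 (2*(0:ℝ)) (2*(0:ℝ)) t) t :=
      fun t => Mfun_hasDerivAt k (h/2) (k*0) (k*A₂) 0 (2*(0:ℝ)) 0 t
    have hode1 : ∀ t, Mfun k (h/2) (k*0) (k*(-(2*N^2*A₂))) 0 (2*(0:ℝ)) 0 t
        + 2 * N ^ 2 * Mfun k (h/2) (k*0) (k*A₂) 0 (2*(0:ℝ)) 0 t = 0 := by
      intro t
      simp only [Mfun]
      ring
    have hode2 : ∀ t, -Rc * Mfun k (h/2) (k*(k*A₂)) (k*(k*0)) 0 (2*(0:ℝ)) (2*(0:ℝ)) t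
        + 4 * N ^ 2 * Mfun k (h/2) A₂ 0 0 0 C₂ t
        + 2 * N ^ 2 * Mfun k (h/2) (-(2*N^2*A₂)) 0 0 0 (-B) t = 1 := by
      intro t
      simp only [Mfun]
      linear_combination (-(A₂ * Real.cosh (k * (t - h/2)))) * hk2 + (-1 : ℝ) * h2NB
    have hbψ0 : Mfun k (h/2) A₂ 0 0 0 C₂ 0 = 0 := by
      rw [Mfun_eval0, hC2]; ring
    have hbψh : Mfun k (h/2) A₂ 0 0 0 C₂ h = 0 := by
      rw [Mfun_evalh, hC2]; ring
    have hDen' : 2 * N ^ 2 * S - k * h * C ≠ 0 := by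
      rw [← hDen]; exact hDenneg.ne
    clear_value Den A₂ C₂ B
    have hmain : N ^ 2 * A₂ * S * 4 + B * h * k = 0 := by
      have hX : (N ^ 2 * A₂ * S * 4 + B * h * k) * (2 * N ^ 2) = 0 := by
        linear_combination (h*k) * h2NB + (4*N^2*h*k) * hC2 + (-(4*N^2*A₂)) * hDen
          + hA2id
      rcases mul_eq_zero.mp hX with h' | h'
      · exact h'
      · exact absurd h' (by positivity)
    have hφ0val : (2*N^2*A₂/k) * S + B * h / 2 = 0 := by
      have : (2*N^2*A₂/k) * S + B * h / 2 = (N ^ 2 * A₂ * S * 4 + B * h * k) / (2*k) := by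
        field_simp; ring
      rw [this, hmain]
      simp
    have hbφ0 : Mfun k (h/2) 0 (-(2*N^2*A₂/k)) 0 (-B) 0 0 = 0 := by
      rw [Mfun_eval0]; linear_combination hφ0val
    have hbφh : Mfun k (h/2) 0 (-(2*N^2*A₂/k)) 0 (-B) 0 h = 0 := by
      rw [Mfun_evalh]; linear_combination (-1 : ℝ) * hφ0val
    have key2 := key_pairing N Rc h q G 0 1 hh u w hsol _ _ _ _ _ _
      hφd hφ'd hψd hψ'd (Mfun_continuous _ _ _ _ _ _ _) (Mfun_continuous _ _ _ _ _ _ _)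
      hode1 hode2 hbφ0 hbφh hbψ0 hbψh
    rw [Mfun_integral k 0 (-(2*N^2*A₂/k)) 0 (-B) 0 h hk0.ne',
      Mfun_integral k A₂ 0 0 0 C₂ h hk0.ne'] at key2
    rw [← hSdef] at key2
    have key2' : ∫ t in (0:ℝ)..h, w t = G * (2 * A₂ / k * S + C₂ * h) := by
      linear_combination key2
    rw [key2']
    rw [Real.tanh_eq_sinh_div_cosh, ← hSdef, ← hCdef]
    have e1 : 2*(S/C) - k*h = (2*S - k*h*C)/C := by field_simp
    have e2 : 2*N^2*(S/C) - k*h = (2*N^2*S - k*h*C)/C := by field_simp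
    rw [e1, e2, div_div_div_cancel_right₀ hC0.ne']
    field_simp [hDen']
    rw [eq_div_iff (by contrapose! hDen'; linarith)]
    linear_combination (4*G*N^2*k*h*(2*S*N^2-k*h*C)) * hC2
      + (-(4*G*N^2*A₂*(2*S-k*h*C))) * hDen + (G*(2*S-k*h*C)) * hA2id
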